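/- arXiv:2501.03816 — 5 statements merged into one kernel-verified Lean document; each statement's English description precedes it below -/
import Mathlib

section
/- Let D be a positive, 1-periodic, C² function and let r₀ > 0 be a constant. Set h(x) := ∫₀ˣ D(t)^{−1/2} dt and a := (∫₀¹ D(t)^{−1/2} dt)^{−1} (the harmonic mean of √D). For every λ ∈ ℝ, the function φ_λ(x) := D(x)^{−1/2}·exp(λ(x − a·h(x))) is a positive, 1-periodic, C² function satisfying L_{1/2}^λ[r₀;D]φ_λ = (r₀ + λ²a²)·φ_λ; hence k_{1/2}^λ[r₀;D] = r₀ + λ²a². Consequently the spreading speed for q = 1/2 is c_{1/2}*[r₀;D] = inf_{λ>0} (r₀ + λ²a²)/λ = 2√(r₀)·a. -/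
open Real MeasureTheory Set Filter Topology

noncomputable section

/-- The operator `L_q^λ[r;D]` acting on C² functions `ψ`:
`(L_q^λ[r;D]ψ)(x) = D ψ'' + ((1+q)D' − 2λD) ψ' + (qD'' + λ²D − (1+q)λD' + r) ψ`. -/
def Lop (q lam : ℝ) (r D ψ : ℝ → ℝ) (x : ℝ) : ℝ :=
  D x * deriv (deriv ψ) x + ((1 + q) * deriv D x - 2 * lam * D x) * deriv ψ x +
    (q * deriv (deriv D) x + lam ^ 2 * D x - (1 + q) * lam * deriv D x + r x) * ψ x

/-- `(k, ψ)` is a principal eigenpair of `L_q^λ[r;D]`: `ψ` is a positive, 1-periodic,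
C² function with `L_q^λ[r;D]ψ = kψ`. -/
def IsEigenpair (q lam : ℝ) (r D : ℝ → ℝ) (k : ℝ) (ψ : ℝ → ℝ) : Prop :=
  ContDiff ℝ 2 ψ ∧ (∀ x, 0 < ψ x) ∧ Function.Periodic ψ 1 ∧
    ∀ x, Lop q lam r D ψ x = k * ψ x

/-- The Freidlin–Gärtner infimum `inf_{λ>0} k(λ)/λ`, as an extended real number. -/
def speed (k : ℝ → ℝ) : EReal := ⨅ l : {l : ℝ // 0 < l}, ((k l.1 / l.1 : ℝ) : EReal)

/-- The first derivative of `φ(x) = s(x)⁻¹ · exp(λ(x − a·h(x)))`, where `h' = 1/s`. -/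
def P1 (s h : ℝ → ℝ) (lam a : ℝ) : ℝ → ℝ := fun x =>
  -deriv s x / s x ^ 2 * Real.exp (lam * (x - a * h x)) +
  (s x)⁻¹ * (Real.exp (lam * (x - a * h x)) * (lam * (1 - a * (1 / s x))))

/-- The key computation: with `D = s²` and `h' = 1/s`, the function
`φ(x) = s(x)⁻¹ exp(λ(x − a h(x)))` satisfies `L_{1/2}^λ[r₀;D]φ = (r₀ + λ²a²)φ`. -/
lemma eig (s : ℝ → ℝ) (hs : ContDiff ℝ 2 s) (hspos : ∀ y, 0 < s y)
    (D : ℝ → ℝ) (hDs : D = fun y => s y ^ 2)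
    (r₀ a lam : ℝ) (h : ℝ → ℝ) (hh : ∀ y, HasDerivAt h (1 / s y) y) (x : ℝ) :
    Lop (1/2) lam (fun _ => r₀) D (fun y => (s y)⁻¹ * Real.exp (lam * (y - a * h y))) x
      = (r₀ + lam ^ 2 * a ^ 2) * ((s x)⁻¹ * Real.exp (lam * (x - a * h x))) := by
  have hsne : ∀ y, s y ≠ 0 := fun y => (hspos y).ne'
  have hs' : ∀ y, HasDerivAt s (deriv s y) y :=
    fun y => ((hs.differentiable (by norm_num)) y).hasDerivAt
  have hs1cd : ContDiff ℝ 1 (deriv s) := by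
    rw [show (2:WithTop ℕ∞) = 1+1 from by norm_num, contDiff_succ_iff_deriv] at hs
    exact hs.2.2
  have hs'' : ∀ y, HasDerivAt (deriv s) (deriv (deriv s) y) y :=
    fun y => ((hs1cd.differentiable one_ne_zero) y).hasDerivAt
  have hu : ∀ y, HasDerivAt (fun z => lam * (z - a * h z)) (lam * (1 - a * (1 / s y))) y :=
    fun y => (((hasDerivAt_id y).sub ((hh y).const_mul a)).const_mul lam)
  have hE : ∀ y, HasDerivAt (fun z => Real.exp (lam * (z - a * h z)))
      (Real.exp (lam * (y - a * h y)) * (lam * (1 - a * (1 / s y)))) y :=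
    fun y => (hu y).exp
  have hg : ∀ y, HasDerivAt (fun z => (s z)⁻¹) (-deriv s y / s y ^ 2) y :=
    fun y => (hs' y).inv (hsne y)
  have hφ1 : ∀ y, HasDerivAt (fun z => (s z)⁻¹ * Real.exp (lam * (z - a * h z)))
      (P1 s h lam a y) y := fun y => (hg y).mul (hE y)
  have hd1 : deriv (fun z => (s z)⁻¹ * Real.exp (lam * (z - a * h z))) = P1 s h lam a :=
    funext fun y => (hφ1 y).deriv
  have hw0 : ∀ y, HasDerivAt (fun z => 1 / s z) (-deriv s y / s y ^ 2) y :=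
    fun y => by simpa [one_div] using hg y
  have hw : ∀ y, HasDerivAt (fun z => lam * (1 - a * (1 / s z)))
      (lam * -(a * (-deriv s y / s y ^ 2))) y :=
    fun y => (((hw0 y).const_mul a).const_sub 1).const_mul lam
  have hA : ∀ y, HasDerivAt (fun z => -deriv s z / s z ^ 2)
      ((-deriv (deriv s) y * s y ^ 2 - -deriv s y * ((2:ℕ) * s y ^ 1 * deriv s y)) / (s y ^ 2) ^ 2) y :=
    fun y => ((hs'' y).neg).div ((hs' y).pow 2) (pow_ne_zero 2 (hsne y))
  have hφ2 : ∀ y, HasDerivAt (P1 s h lam a)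
      (((-deriv (deriv s) y * s y ^ 2 - -deriv s y * ((2:ℕ) * s y ^ 1 * deriv s y)) / (s y ^ 2) ^ 2)
          * Real.exp (lam * (y - a * h y)) +
        -deriv s y / s y ^ 2 * (Real.exp (lam * (y - a * h y)) * (lam * (1 - a * (1 / s y)))) +
        (-deriv s y / s y ^ 2 * (Real.exp (lam * (y - a * h y)) * (lam * (1 - a * (1 / s y)))) +
          (s y)⁻¹ * ((Real.exp (lam * (y - a * h y)) * (lam * (1 - a * (1 / s y)))) * (lam * (1 - a * (1 / s y)))
            + Real.exp (lam * (y - a * h y)) * (lam * -(a * (-deriv s y / s y ^ 2)))))) y := by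
    intro y
    exact ((hA y).mul (hE y)).add ((hg y).mul ((hE y).mul (hw y)))
  have hD1 : deriv D = fun y => 2 * s y * deriv s y := by
    subst hDs
    exact funext fun y => by simpa using ((hs' y).fun_pow 2).deriv
  have hD2 : deriv (deriv D) x = 2 * deriv s x * deriv s x + 2 * s x * deriv (deriv s) x := by
    rw [hD1]
    exact (((hs' x).const_mul 2).mul (hs'' x)).deriv
  have hDx : D x = s x ^ 2 := by rw [hDs]
  rw [Lop, hd1, (hφ2 x).deriv, hD2, hD1, hDx]
  simp only [P1]
  have hE0 : Real.exp (lam * (x - a * h x)) ≠ 0 := Real.exp_ne_zero _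
  have hsx : s x ≠ 0 := hsne x
  push_cast
  set S := s x
  set S1 := deriv s x
  set S2 := deriv (deriv s) x
  set Ex := Real.exp (lam * (x - a * h x))
  field_simp
  ring

/-- `φ(x) = s(x)⁻¹ exp(λ(x − a h(x)))` is C² when `s` is C², positive, and `h' = 1/s`. -/
lemma cd2 (s h : ℝ → ℝ) (hs : ContDiff ℝ 2 s) (hspos : ∀ y, 0 < s y)
    (hh : ∀ y, HasDerivAt h (1 / s y) y) (lam a : ℝ) :
    ContDiff ℝ 2 (fun y => (s y)⁻¹ * Real.exp (lam * (y - a * h y))) := by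
  have hsne : ∀ y, s y ≠ 0 := fun y => (hspos y).ne'
  have hhcd : ContDiff ℝ 2 h := by
    rw [show (2:WithTop ℕ∞) = 1+1 from by norm_num, contDiff_succ_iff_deriv]
    refine ⟨fun y => (hh y).differentiableAt, by simp, ?_⟩
    rw [funext fun y => (hh y).deriv]
    exact contDiff_const.div (hs.of_le one_le_two) hsne
  exact (hs.inv hsne).mul
    (Real.contDiff_exp.comp (contDiff_const.mul (contDiff_id.sub (contDiff_const.mul hhcd))))

/-- The infimum `inf_{l>0} (r₀ + l²a²)/l = 2√r₀·a`. -/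
lemma speed_calc (a r₀ : ℝ) (ha : 0 < a) (hr₀ : 0 < r₀) :
    (⨅ l : {l : ℝ // 0 < l}, (((r₀ + l.1 ^ 2 * a ^ 2) / l.1 : ℝ) : EReal))
      = ((2 * Real.sqrt r₀ * a : ℝ) : EReal) := by
  have hsr : 0 < Real.sqrt r₀ := Real.sqrt_pos.2 hr₀
  have hsq : Real.sqrt r₀ ^ 2 = r₀ := Real.sq_sqrt hr₀.le
  apply le_antisymm
  · have hl : (0:ℝ) < Real.sqrt r₀ / a := div_pos hsr ha
    have := iInf_le (fun l : {l : ℝ // 0 < l} =>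
      (((r₀ + l.1 ^ 2 * a ^ 2) / l.1 : ℝ) : EReal)) ⟨Real.sqrt r₀ / a, hl⟩
    refine this.trans_eq ?_
    norm_cast
    rw [div_pow, div_mul_eq_mul_div, hsq]
    field_simp
    nlinarith [hsq]
  · refine le_iInf fun l => ?_
    have hl := l.2
    rw [EReal.coe_le_coe_iff, le_div_iff₀ hl]
    nlinarith [sq_nonneg (l.1 * a - Real.sqrt r₀), hsq, hsr.le, hl.le]

/-- Theorem `r_constant (ii)`. For constant growth rate `r₀ > 0` and
Stratonovich diffusion `q = 1/2`, the function `φ_λ(x) = D(x)^{−1/2}·exp(λ(x − a·h(x)))`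
is a principal eigenfunction with eigenvalue `r₀ + λ²a²`, where `h(x) = ∫₀ˣ D^{−1/2}` and
`a = (∫₀¹ D^{−1/2})⁻¹`; consequently `c_{1/2}*[r₀;D] = 2 √r₀ · a`. -/
theorem stmt_8 (D : ℝ → ℝ) (hD : ContDiff ℝ 2 D) (hDpos : ∀ x, 0 < D x)
    (hDper : Function.Periodic D 1) (r₀ : ℝ) (hr₀ : 0 < r₀) :
    (∀ lam : ℝ, IsEigenpair (1 / 2) lam (fun _ => r₀) D
        (r₀ + lam ^ 2 * ((∫ t in (0:ℝ)..1, 1 / Real.sqrt (D t))⁻¹) ^ 2)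
        (fun x => (Real.sqrt (D x))⁻¹ *
          Real.exp (lam * (x - (∫ t in (0:ℝ)..1, 1 / Real.sqrt (D t))⁻¹ *
            ∫ t in (0:ℝ)..x, 1 / Real.sqrt (D t))))) ∧
      speed (fun lam => r₀ + lam ^ 2 * ((∫ t in (0:ℝ)..1, 1 / Real.sqrt (D t))⁻¹) ^ 2) =
        ((2 * Real.sqrt r₀ * (∫ t in (0:ℝ)..1, 1 / Real.sqrt (D t))⁻¹ : ℝ) : EReal) := by
  have hspos : ∀ y, 0 < Real.sqrt (D y) := fun y => Real.sqrt_pos.2 (hDpos y)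
  have hscd : ContDiff ℝ 2 (fun y => Real.sqrt (D y)) := hD.sqrt fun y => (hDpos y).ne'
  have hgc : Continuous fun t => 1 / Real.sqrt (D t) :=
    continuous_const.div (hD.continuous.sqrt) (fun t => (hspos t).ne')
  have hint : ∀ u v : ℝ, IntervalIntegrable (fun t => 1 / Real.sqrt (D t)) volume u v :=
    fun u v => hgc.intervalIntegrable u v
  have hh : ∀ y : ℝ, HasDerivAt (fun u => ∫ t in (0:ℝ)..u, 1 / Real.sqrt (D t))
      (1 / Real.sqrt (D y)) y := fun y =>
    intervalIntegral.integral_hasDerivAt_right (hint 0 y)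
      (hgc.stronglyMeasurableAtFilter _ _) hgc.continuousAt
  have hgper : Function.Periodic (fun t => 1 / Real.sqrt (D t)) 1 := fun x => by
    simp [hDper x]
  have hcpos : 0 < ∫ t in (0:ℝ)..1, 1 / Real.sqrt (D t) :=
    intervalIntegral.intervalIntegral_pos_of_pos (hint 0 1)
      (fun t => div_pos one_pos (hspos t)) one_pos
  have hcne : (∫ t in (0:ℝ)..1, 1 / Real.sqrt (D t)) ≠ 0 := hcpos.ne'
  have hper_h : ∀ x : ℝ, (∫ t in (0:ℝ)..(x+1), 1 / Real.sqrt (D t))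
      = (∫ t in (0:ℝ)..x, 1 / Real.sqrt (D t)) + ∫ t in (0:ℝ)..1, 1 / Real.sqrt (D t) := by
    intro x
    rw [← intervalIntegral.integral_add_adjacent_intervals (hint 0 x) (hint x (x+1))]
    congr 1
    simpa using hgper.intervalIntegral_add_eq x 0
  constructor
  · intro lam
    refine ⟨?_, ?_, ?_, ?_⟩
    · exact cd2 (fun y => Real.sqrt (D y)) _ hscd hspos hh lam _
    · intro x
      exact mul_pos (inv_pos.2 (hspos x)) (Real.exp_pos _)
    · intro x
      have harg : lam * (x + 1 - (∫ t in (0:ℝ)..1, 1 / Real.sqrt (D t))⁻¹ *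
            ((∫ t in (0:ℝ)..x, 1 / Real.sqrt (D t)) + ∫ t in (0:ℝ)..1, 1 / Real.sqrt (D t)))
          = lam * (x - (∫ t in (0:ℝ)..1, 1 / Real.sqrt (D t))⁻¹ *
            ∫ t in (0:ℝ)..x, 1 / Real.sqrt (D t)) := by
        rw [mul_add, inv_mul_cancel₀ hcne]
        ring
      simp only [hDper x, hper_h x, harg]
    · exact fun x => eig (fun y => Real.sqrt (D y)) hscd hspos D
        (funext fun y => (Real.sq_sqrt (hDpos y).le).symm) r₀ _ lam _ hh x
  · exact speed_calc _ r₀ (inv_pos.2 hcpos) hr₀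
end
end

section
/- Let D be a positive, 1-periodic, C² function, let r₀ > 0 be a constant, and let q ∈ ℝ. Suppose that for every λ > 0 we are given a principal eigenpair (k(λ), ψ_λ) of L_q^λ[r₀;D]. Then inf_{λ>0} k(λ)/λ ≤ 2√(r₀)·a, where a := (∫₀¹ D(t)^{−1/2} dt)^{−1}. That is, for constant growth rate the spreading speed is maximal for the Stratonovich diffusion q = 1/2, where it equals 2√(r₀)·a. -/
open Real MeasureTheory Set Filter Topology

noncomputable section

/-- A 1-periodic function has 1-periodic derivative. -/
lemma periodic_deriv' (f : ℝ → ℝ) (hf : Function.Periodic f 1) :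
    Function.Periodic (deriv f) 1 := by
  intro x
  have h : (fun y => f (y + 1)) = f := funext hf
  calc deriv f (x + 1) = deriv (fun y => f (y + 1)) x := by
        rw [deriv_comp_add_const]
    _ = deriv f x := by rw [h]

/-- Theorem `r_constant (iii)`. For constant growth rate `r₀ > 0` and
any `q`, the spreading speed is at most `2 √r₀ · a`, with `a = (∫₀¹ D^{−1/2})⁻¹` —
the maximal value, attained at `q = 1/2`. -/
theorem stmt_9 (D : ℝ → ℝ) (hD : ContDiff ℝ 2 D) (hDpos : ∀ x, 0 < D x)
    (hDper : Function.Periodic D 1) (r₀ q : ℝ) (hr₀ : 0 < r₀)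
    (k : ℝ → ℝ) (ψ : ℝ → ℝ → ℝ)
    (hk : ∀ lam > (0 : ℝ), IsEigenpair q lam (fun _ => r₀) D (k lam) (ψ lam)) :
    speed k ≤
      ((2 * Real.sqrt r₀ * (∫ t in (0:ℝ)..1, 1 / Real.sqrt (D t))⁻¹ : ℝ) : EReal) := by
  classical
  set I : ℝ := ∫ t in (0:ℝ)..1, 1 / Real.sqrt (D t) with hIdef
  -- basic regularity of D
  have hDc : Continuous D := hD.continuous
  have h2D := contDiff_succ_iff_deriv.mp
    (by rw [show ((1 : WithTop ℕ∞) + 1) = 2 by norm_num]; exact hD :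
      ContDiff ℝ ((1 : WithTop ℕ∞) + 1) D)
  have hDd1 : Differentiable ℝ D := h2D.1
  have hDdc : Continuous (deriv D) := h2D.2.2.continuous
  have hDdd : Differentiable ℝ (deriv D) := h2D.2.2.differentiable (by norm_num)
  -- positivity of I
  have hIc : Continuous fun t => 1 / Real.sqrt (D t) :=
    continuous_const.div (hDc.sqrt) (fun x => (Real.sqrt_pos.mpr (hDpos x)).ne')
  have hIpos : 0 < I := by
    rw [hIdef]
    exact intervalIntegral.intervalIntegral_pos_of_pos (hIc.intervalIntegrable 0 1)
      (fun x => div_pos one_pos (Real.sqrt_pos.mpr (hDpos x))) one_pos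
  set lam : ℝ := Real.sqrt r₀ * I with hlamdef
  have hlam : 0 < lam := mul_pos (Real.sqrt_pos.mpr hr₀) hIpos
  obtain ⟨hψcd, hψpos, hψper, heq⟩ := hk lam hlam
  set Ψ : ℝ → ℝ := ψ lam with hΨdef
  set K : ℝ := k lam with hKdef
  -- regularity of Ψ
  have hΨc : Continuous Ψ := hψcd.continuous
  have h2Ψ := contDiff_succ_iff_deriv.mp
    (by rw [show ((1 : WithTop ℕ∞) + 1) = 2 by norm_num]; exact hψcd :
      ContDiff ℝ ((1 : WithTop ℕ∞) + 1) Ψ)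
  have hΨd1 : Differentiable ℝ Ψ := h2Ψ.1
  have hΨdc : Continuous (deriv Ψ) := h2Ψ.2.2.continuous
  have hΨdd : Differentiable ℝ (deriv Ψ) := h2Ψ.2.2.differentiable (by norm_num)
  -- the key auxiliary function N
  set N : ℝ → ℝ := fun x => D x * deriv Ψ x + (q * deriv D x - lam * D x) * Ψ x with hNdef
  have hNder : ∀ x, HasDerivAt N (lam * N x + (K - r₀) * Ψ x) x := by
    intro x
    have h1 : HasDerivAt D (deriv D x) x := (hDd1 x).hasDerivAt
    have h2 : HasDerivAt (deriv D) (deriv (deriv D) x) x := (hDdd x).hasDerivAt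
    have h3 : HasDerivAt Ψ (deriv Ψ x) x := (hΨd1 x).hasDerivAt
    have h4 : HasDerivAt (deriv Ψ) (deriv (deriv Ψ) x) x := (hΨdd x).hasDerivAt
    have h5 := (h1.mul h4).add (((h2.const_mul q).sub (h1.const_mul lam)).mul h3)
    rw [hNdef]
    refine h5.congr_deriv ?_
    have hl := heq x
    simp only [Lop] at hl
    simp only [Pi.sub_apply]
    linear_combination hl
  have hNcont : Continuous N := by
    rw [hNdef]
    exact (hDc.mul hΨdc).add (((continuous_const.mul hDdc).sub (continuous_const.mul hDc)).mul hΨc)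
  have hNper : Function.Periodic N 1 := by
    intro x
    have e3 : deriv D (x + 1) = deriv D x := periodic_deriv' D hDper x
    have e4 : deriv Ψ (x + 1) = deriv Ψ x := periodic_deriv' Ψ hψper x
    simp only [hNdef, hDper x, hψper x, e3, e4]
  -- reduce to K ≤ 2 r₀
  suffices hK : K ≤ 2 * r₀ by
    have hstep : (K / lam : ℝ) ≤ 2 * Real.sqrt r₀ * I⁻¹ := by
      rw [div_le_iff₀ hlam]
      have hcalc : 2 * Real.sqrt r₀ * I⁻¹ * lam = 2 * r₀ := by
        rw [hlamdef]
        have hms := Real.mul_self_sqrt hr₀.le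
        field_simp
        linear_combination hms
      rw [hcalc]; exact hK
    have hle : speed k ≤ ((K / lam : ℝ) : EReal) := by
      have := iInf_le (fun l : {l : ℝ // 0 < l} => ((k l.1 / l.1 : ℝ) : EReal)) ⟨lam, hlam⟩
      exact this
    exact hle.trans (by exact_mod_cast hstep)
  by_cases hμ' : K - r₀ ≤ 0
  · linarith
  push_neg at hμ'
  set μ : ℝ := K - r₀ with hμdef
  have hμ : 0 < μ := hμ'
  -- N is everywhere negative
  have hNneg : ∀ x, N x < 0 := by
    have hmono : StrictMono (fun x => N x * Real.exp (-lam * x)) := by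
      apply strictMono_of_deriv_pos
      intro x
      have he : HasDerivAt (fun y : ℝ => Real.exp (-lam * y)) (-lam * Real.exp (-lam * x)) x := by
        have h0 := ((hasDerivAt_id x).const_mul (-lam)).exp
        simpa [mul_comm] using h0
      have hd : HasDerivAt (fun y => N y * Real.exp (-lam * y))
          (μ * Ψ x * Real.exp (-lam * x)) x := by
        have := (hNder x).mul he
        exact this.congr_deriv (by rw [hμdef]; ring)
      rw [hd.deriv]
      exact mul_pos (mul_pos hμ (hψpos x)) (Real.exp_pos _)
    intro x
    have h1 := hmono (lt_add_one x)
    simp only [] at h1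
    rw [hNper x] at h1
    have hex : Real.exp (-lam * (x + 1)) = Real.exp (-lam * x) * Real.exp (-lam) := by
      rw [← Real.exp_add]; ring_nf
    rw [hex] at h1
    have ht : 0 < Real.exp (-lam * x) := Real.exp_pos _
    have hs1 : Real.exp (-lam) < 1 := by
      rw [← Real.exp_zero]
      exact Real.exp_lt_exp.mpr (by linarith)
    by_contra hc
    push_neg at hc
    have h2 : Real.exp (-lam * x) * Real.exp (-lam) ≤ Real.exp (-lam * x) := by nlinarith
    have h3 : N x * (Real.exp (-lam * x) * Real.exp (-lam)) ≤ N x * Real.exp (-lam * x) :=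
      mul_le_mul_of_nonneg_left h2 hc
    linarith
  -- the two integrands
  set f : ℝ → ℝ := fun x => lam - deriv Ψ x / Ψ x - q * (deriv D x / D x) with hfdef
  set g : ℝ → ℝ := fun x => Ψ x / (-N x) with hgdef
  have hfc : Continuous f := by
    rw [hfdef]
    exact (continuous_const.sub (hΨdc.div hΨc fun x => (hψpos x).ne')).sub
      (continuous_const.mul (hDdc.div hDc fun x => (hDpos x).ne'))
  have hgc : Continuous g := by
    rw [hgdef]
    exact hΨc.div hNcont.neg fun x => (neg_pos.mpr (hNneg x)).ne'
  -- ∫ f = lam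
  have hfint : ∫ x in (0:ℝ)..1, f x = lam := by
    have hF : ∀ x ∈ uIcc (0:ℝ) 1,
        HasDerivAt (fun y => lam * y - Real.log (Ψ y) - q * Real.log (D y)) (f x) x := by
      intro x _
      have h1 : HasDerivAt (fun y => Real.log (Ψ y)) (deriv Ψ x / Ψ x) x :=
        ((hΨd1 x).hasDerivAt).log (hψpos x).ne'
      have h2 : HasDerivAt (fun y => Real.log (D y)) (deriv D x / D x) x :=
        ((hDd1 x).hasDerivAt).log (hDpos x).ne'
      have h3 : HasDerivAt (fun y : ℝ => lam * y) lam x := by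
        simpa using (hasDerivAt_id x).const_mul lam
      have := (h3.sub h1).sub (h2.const_mul q)
      rw [hfdef]
      exact this
    rw [intervalIntegral.integral_eq_sub_of_hasDerivAt hF (hfc.intervalIntegrable 0 1)]
    have e1 : Ψ 1 = Ψ 0 := by simpa using hψper 0
    have e2 : D 1 = D 0 := by simpa using hDper 0
    rw [e1, e2]; ring
  -- ∫ g = lam / μ
  have hgint : ∫ x in (0:ℝ)..1, g x = lam / μ := by
    have hG : ∀ x ∈ uIcc (0:ℝ) 1,
        HasDerivAt (fun y => (lam * y - Real.log (-N y)) / μ) (g x) x := by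
      intro x _
      have hneg : HasDerivAt (fun y => -N y) (-(lam * N x + μ * Ψ x)) x := (hNder x).neg
      have hlog : HasDerivAt (fun y => Real.log (-N y))
          (-(lam * N x + μ * Ψ x) / (-N x)) x :=
        hneg.log (neg_pos.mpr (hNneg x)).ne'
      have h3 : HasDerivAt (fun y : ℝ => lam * y) lam x := by
        simpa using (hasDerivAt_id x).const_mul lam
      have h4 := (h3.sub hlog).div_const μ
      refine h4.congr_deriv ?_
      rw [hgdef]
      field_simp [(hNneg x).ne]
      ring
    rw [intervalIntegral.integral_eq_sub_of_hasDerivAt hG (hgc.intervalIntegrable 0 1)]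
    have e1 : N 1 = N 0 := by simpa using hNper 0
    rw [e1]; field_simp; ring
  -- pointwise AM-GM bound
  set s : ℝ := Real.sqrt μ with hsdef
  have hs : 0 < s := Real.sqrt_pos.mpr hμ
  have hs2 : s ^ 2 = μ := Real.sq_sqrt hμ.le
  have hpoint : ∀ x ∈ Icc (0:ℝ) 1,
      1 / Real.sqrt (D x) ≤ (1 / (2 * s)) * f x + (s / 2) * g x := by
    intro x _
    have hfx : f x = (-N x) / (D x * Ψ x) := by
      rw [hfdef, hNdef]
      field_simp [(hψpos x).ne', (hDpos x).ne']
      ring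
    have hfpos : 0 < f x := by
      rw [hfx]
      exact div_pos (neg_pos.mpr (hNneg x)) (mul_pos (hDpos x) (hψpos x))
    have hgpos : 0 < g x := by
      rw [hgdef]
      exact div_pos (hψpos x) (neg_pos.mpr (hNneg x))
    have hprod : f x * g x = 1 / D x := by
      rw [hfx, hgdef]
      field_simp [(hNneg x).ne, (hψpos x).ne', (hDpos x).ne']
    have e1 : Real.sqrt (f x) ^ 2 = f x := Real.sq_sqrt hfpos.le
    have e2 : Real.sqrt (g x) ^ 2 = g x := Real.sq_sqrt hgpos.le
    have e3 : Real.sqrt (f x) * Real.sqrt (g x) = Real.sqrt (f x * g x) :=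
      (Real.sqrt_mul hfpos.le _).symm
    have key2 : 2 * s * Real.sqrt (f x * g x) ≤ f x + s ^ 2 * g x := by
      nlinarith [sq_nonneg (Real.sqrt (f x) - s * Real.sqrt (g x))]
    have hexp : (1 / (2 * s)) * f x + (s / 2) * g x = (f x + s ^ 2 * g x) / (2 * s) := by
      field_simp
    have hsq : Real.sqrt (f x * g x) = 1 / Real.sqrt (D x) := by
      rw [hprod, one_div, Real.sqrt_inv, one_div]
    rw [hexp, le_div_iff₀ (by positivity)]
    calc 1 / Real.sqrt (D x) * (2 * s) = 2 * s * Real.sqrt (f x * g x) := by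
          rw [hsq]; ring
      _ ≤ f x + s ^ 2 * g x := key2
  -- integrate the pointwise bound
  have hRc : Continuous fun x => (1 / (2 * s)) * f x + (s / 2) * g x :=
    (continuous_const.mul hfc).add (continuous_const.mul hgc)
  have hmono : I ≤ ∫ x in (0:ℝ)..1, ((1 / (2 * s)) * f x + (s / 2) * g x) := by
    rw [hIdef]
    exact intervalIntegral.integral_mono_on (by norm_num)
      (hIc.intervalIntegrable 0 1) (hRc.intervalIntegrable 0 1) hpoint
  have hsplit : ∫ x in (0:ℝ)..1, ((1 / (2 * s)) * f x + (s / 2) * g x)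
      = (1 / (2 * s)) * lam + (s / 2) * (lam / μ) := by
    rw [intervalIntegral.integral_add (f := fun x => (1 / (2 * s)) * f x) (g := fun x => (s / 2) * g x) ((continuous_const.mul hfc).intervalIntegrable 0 1)
      ((continuous_const.mul hgc).intervalIntegrable 0 1),
      intervalIntegral.integral_const_mul, intervalIntegral.integral_const_mul, hfint, hgint]
  have hval : (1 / (2 * s)) * lam + (s / 2) * (lam / μ) = lam / s := by
    rw [← hs2]
    field_simp
    ring
  have hIlam : I ≤ lam / s := by
    rw [hsplit, hval] at hmono
    exact hmono
  have hslr : s ≤ Real.sqrt r₀ := by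
    have h1 : I * s ≤ lam := (le_div_iff₀ hs).mp hIlam
    rw [hlamdef, mul_comm I s] at h1
    exact le_of_mul_le_mul_right h1 hIpos
  have hμr : μ ≤ r₀ := by
    nlinarith [Real.sq_sqrt hr₀.le, Real.sqrt_nonneg r₀]
  linarith [hμr]
end
end

section
/- Let D be a positive, 1-periodic, C² function and r a continuous 1-periodic function. Let q, λ, k ∈ ℝ and let φ be a positive, 1-periodic, C² function with L_q^λ[r;D]φ = kφ. Define h(x) := ∫₀ˣ D(t)^{−1/2} dt, let H : ℝ → ℝ be the inverse of h (so H(h(x)) = x and h(H(y)) = y for all x, y), and set P(y) := ln D(H(y)), R(y) := r(H(y)), s := 1/2 − q, and μ := λ/h(1). Then the function ψ(y) := √(D(H(y)))·exp(λ(y/h(1) − H(y)))·φ(H(y)) is positive, h(1)-periodic, C², and satisfies ψ''(y) − d/dy[(2μ + s·P'(y))·ψ(y)] + (R(y) + μ·s·P'(y) + μ²)·ψ(y) = k·ψ(y) for all y ∈ ℝ. In particular k_q^λ[r;D] equals the principal eigenvalue of the transformed operator at shift μ = λ·⟨√D⟩_H, where ⟨√D⟩_H = 1/h(1). -/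
open Real MeasureTheory Set Filter Topology

noncomputable section

set_option maxHeartbeats 2000000 in
/-- Proposition `equiv_unif_laplacian`. Under the change of variable
`y = h(x)` with `h(x) = ∫₀ˣ D^{−1/2}`, a principal eigenpair `(k, φ)` of `L_q^λ[r;D]`
is transformed into a positive `h(1)`-periodic C² eigenfunction
`ψ(y) = √(D(H(y)))·exp(λ(y/h(1) − H(y)))·φ(H(y))` of the operator
`Φ ↦ Φ'' − ((2μ + s P')Φ)' + (R + μ s P' + μ²)Φ` with the same eigenvalue `k`, where
`μ = λ/h(1)`, `s = 1/2 − q`, `P = ln D ∘ H`, `R = r ∘ H`. -/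
theorem stmt_10 (D r : ℝ → ℝ) (hD : ContDiff ℝ 2 D) (hDpos : ∀ x, 0 < D x)
    (hDper : Function.Periodic D 1) (hr : Continuous r) (hrper : Function.Periodic r 1)
    (q lam k : ℝ) (φ : ℝ → ℝ) (hφ : IsEigenpair q lam r D k φ)
    (h H : ℝ → ℝ) (hh : ∀ x, h x = ∫ t in (0:ℝ)..x, 1 / Real.sqrt (D t))
    (hH1 : ∀ x, H (h x) = x) (hH2 : ∀ y, h (H y) = y) :
    let P : ℝ → ℝ := fun y => Real.log (D (H y))
    let R : ℝ → ℝ := fun y => r (H y)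
    let s : ℝ := 1 / 2 - q
    let μ : ℝ := lam / h 1
    let ψ : ℝ → ℝ := fun y =>
      Real.sqrt (D (H y)) * Real.exp (lam * (y / h 1 - H y)) * φ (H y)
    (∀ y, 0 < ψ y) ∧ Function.Periodic ψ (h 1) ∧ ContDiff ℝ 2 ψ ∧
      ∀ y, deriv (deriv ψ) y - deriv (fun z => (2 * μ + s * deriv P z) * ψ z) y +
          (R y + μ * s * deriv P y + μ ^ 2) * ψ y = k * ψ y := by
  obtain ⟨hφC, hφpos, hφper, hφeq⟩ := hφ
  intro P R s μ ψ
  -- basic regularity facts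
  have hDc : Continuous D := hD.continuous
  have hD1 : Differentiable ℝ D := hD.differentiable (by norm_num)
  have hDne : ∀ x, D x ≠ 0 := fun x => (hDpos x).ne'
  have hsqpos : ∀ x, 0 < Real.sqrt (D x) := fun x => Real.sqrt_pos.mpr (hDpos x)
  have hsqne : ∀ x, Real.sqrt (D x) ≠ 0 := fun x => (hsqpos x).ne'
  have hD1C : ContDiff ℝ 1 (deriv D) := by
    have h2 : ContDiff ℝ ((1:WithTop ℕ∞) + 1) D := by
      rw [show (1:WithTop ℕ∞) + 1 = 2 from rfl]; exact hD
    exact (contDiff_succ_iff_deriv.mp h2).2.2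
  have hD1d : Differentiable ℝ (deriv D) := hD1C.differentiable one_ne_zero
  have hφc : Continuous φ := hφC.continuous
  have hφ1 : Differentiable ℝ φ := hφC.differentiable (by norm_num)
  have hφ1C : ContDiff ℝ 1 (deriv φ) := by
    have h2 : ContDiff ℝ ((1:WithTop ℕ∞) + 1) φ := by
      rw [show (1:WithTop ℕ∞) + 1 = 2 from rfl]; exact hφC
    exact (contDiff_succ_iff_deriv.mp h2).2.2
  have hφ1d : Differentiable ℝ (deriv φ) := hφ1C.differentiable one_ne_zero
  -- derivative of h
  have hic : Continuous (fun t => 1 / Real.sqrt (D t)) :=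
    Continuous.div continuous_const hDc.sqrt hsqne
  have hd : ∀ x, HasDerivAt h (1 / Real.sqrt (D x)) x := by
    intro x
    have := (hic.integral_hasStrictDerivAt 0 x).hasDerivAt
    exact this.congr_of_eventuallyEq (by filter_upwards with z using (hh z))
  have hmono : StrictMono h := strictMono_of_deriv_pos fun x => by
    rw [(hd x).deriv]; exact div_pos one_pos (hsqpos x)
  have hHmono : Monotone H := by
    intro y1 y2 h12
    by_contra hc
    push_neg at hc
    have := hmono hc
    rw [hH2, hH2] at this
    exact absurd h12 (not_le.mpr this)
  have hHsurj : Function.Surjective H := fun x => ⟨h x, hH1 x⟩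
  have hHcont : Continuous H := hHmono.continuous_of_surjective hHsurj
  -- derivative of H
  have hH : ∀ y, HasDerivAt H (Real.sqrt (D (H y))) y := by
    intro y
    have := HasDerivAt.of_local_left_inverse hHcont.continuousAt (hd (H y))
      (one_div_ne_zero (hsqne _)) (Filter.Eventually.of_forall hH2)
    simpa [one_div] using this
  -- h 1 > 0
  have hh0 : h 0 = 0 := by rw [hh]; simp
  have hh1pos : 0 < h 1 := by
    have := hmono (show (0:ℝ) < 1 by norm_num)
    rwa [hh0] at this
  have hh1ne : h 1 ≠ 0 := hh1pos.ne'
  -- positivity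
  have hpos : ∀ y, 0 < ψ y := fun y => by
    have := hφpos (H y); have := hsqpos (H y); have := Real.exp_pos (lam * (y / h 1 - H y))
    show 0 < Real.sqrt (D (H y)) * Real.exp (lam * (y / h 1 - H y)) * φ (H y)
    positivity
  -- periodicity
  have hip : Function.Periodic (fun t => 1 / Real.sqrt (D t)) 1 := fun x => by
    simp [hDper x]
  have hper : ∀ x, h (x + 1) = h x + h 1 := by
    intro x
    have hint : ∀ a b : ℝ, IntervalIntegrable (fun t => 1 / Real.sqrt (D t)) volume a b :=
      fun a b => hic.intervalIntegrable a b
    have h1 : h (x + 1) = h x + ∫ t in x..x + 1, 1 / Real.sqrt (D t) := by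
      rw [hh, hh, ← intervalIntegral.integral_add_adjacent_intervals (hint 0 x) (hint x (x+1))]
    rw [h1, hip.intervalIntegral_add_eq x 0]
    simp [hh]
  have hHper : ∀ y, H (y + h 1) = H y + 1 := by
    intro y
    have : h (H y + 1) = y + h 1 := by rw [hper, hH2]
    rw [← this, hH1]
  have hperψ : Function.Periodic ψ (h 1) := by
    intro y
    show Real.sqrt (D (H (y + h 1))) * Real.exp (lam * ((y + h 1) / h 1 - H (y + h 1))) *
        φ (H (y + h 1)) = Real.sqrt (D (H y)) * Real.exp (lam * (y / h 1 - H y)) * φ (H y)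
    rw [hHper, hDper (H y), hφper (H y)]
    congr 2
    have : (y + h 1) / h 1 = y / h 1 + 1 := by field_simp
    rw [this]; ring_nf
  -- smoothness
  have hHC1 : ContDiff ℝ 1 H := by
    rw [contDiff_one_iff_deriv]
    refine ⟨fun y => (hH y).differentiableAt, ?_⟩
    have : deriv H = fun y => Real.sqrt (D (H y)) := funext fun y => (hH y).deriv
    rw [this]
    exact (hDc.comp hHcont).sqrt
  have hHC2 : ContDiff ℝ 2 H := by
    rw [show (2 : WithTop ℕ∞) = 1 + 1 from rfl, contDiff_succ_iff_deriv]
    refine ⟨fun y => (hH y).differentiableAt, by simp, ?_⟩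
    have : deriv H = fun y => Real.sqrt (D (H y)) := funext fun y => (hH y).deriv
    rw [this]
    exact contDiff_iff_contDiffAt.mpr fun y =>
      (Real.contDiffAt_sqrt (hDne (H y))).comp y
        (((hD.of_le (by norm_num)).comp hHC1).contDiffAt)
  have hDH2 : ContDiff ℝ 2 (fun y => D (H y)) := hD.comp hHC2
  have hSC : ContDiff ℝ 2 (fun y => Real.sqrt (D (H y))) :=
    contDiff_iff_contDiffAt.mpr fun y =>
      (Real.contDiffAt_sqrt (hDne (H y))).comp y hDH2.contDiffAt
  have hEC : ContDiff ℝ 2 (fun y => Real.exp (lam * (y / h 1 - H y))) :=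
    Real.contDiff_exp.comp (contDiff_const.mul ((contDiff_id.div_const (h 1)).sub hHC2))
  have hψC : ContDiff ℝ 2 ψ := (hSC.mul hEC).mul (hφC.comp hHC2)
  refine ⟨hpos, hperψ, hψC, ?_⟩
  -- first derivatives of building blocks
  have hDHd : ∀ y, HasDerivAt (fun z => D (H z)) (deriv D (H y) * Real.sqrt (D (H y))) y :=
    fun y => ((hD1 (H y)).hasDerivAt).comp y (hH y)
  have hSd : ∀ y, HasDerivAt (fun z => Real.sqrt (D (H z))) (deriv D (H y) / 2) y := by
    intro y
    have h0 := (Real.hasDerivAt_sqrt (hDne (H y))).comp y (hDHd y)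
    refine h0.congr_deriv ?_
    field_simp [hsqne (H y)]
  have hφHd : ∀ y, HasDerivAt (fun z => φ (H z)) (deriv φ (H y) * Real.sqrt (D (H y))) y :=
    fun y => ((hφ1 (H y)).hasDerivAt).comp y (hH y)
  have hD1Hd : ∀ y, HasDerivAt (fun z => deriv D (H z))
      (deriv (deriv D) (H y) * Real.sqrt (D (H y))) y :=
    fun y => ((hD1d (H y)).hasDerivAt).comp y (hH y)
  have hφ1Hd : ∀ y, HasDerivAt (fun z => deriv φ (H z))
      (deriv (deriv φ) (H y) * Real.sqrt (D (H y))) y :=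
    fun y => ((hφ1d (H y)).hasDerivAt).comp y (hH y)
  have hLind : ∀ y, HasDerivAt (fun z => lam * (z / h 1 - H z))
      (lam * (1 / h 1 - Real.sqrt (D (H y)))) y :=
    fun y => (((hasDerivAt_id y).div_const (h 1)).sub (hH y)).const_mul lam
  have hEd : ∀ y, HasDerivAt (fun z => Real.exp (lam * (z / h 1 - H z)))
      (Real.exp (lam * (y / h 1 - H y)) * (lam * (1 / h 1 - Real.sqrt (D (H y))))) y :=
    fun y => (hLind y).exp
  -- first derivative of ψ
  have hψd : ∀ y, HasDerivAt ψ
      ((deriv D (H y) / 2 * Real.exp (lam * (y / h 1 - H y)) +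
        Real.sqrt (D (H y)) * (Real.exp (lam * (y / h 1 - H y)) *
          (lam * (1 / h 1 - Real.sqrt (D (H y)))))) * φ (H y) +
       Real.sqrt (D (H y)) * Real.exp (lam * (y / h 1 - H y)) *
         (deriv φ (H y) * Real.sqrt (D (H y)))) y :=
    fun y => ((hSd y).mul (hEd y)).mul (hφHd y)
  have hψ1 : deriv ψ = fun z =>
      (deriv D (H z) / 2 * Real.exp (lam * (z / h 1 - H z)) +
        Real.sqrt (D (H z)) * (Real.exp (lam * (z / h 1 - H z)) *
          (lam * (1 / h 1 - Real.sqrt (D (H z)))))) * φ (H z) +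
       Real.sqrt (D (H z)) * Real.exp (lam * (z / h 1 - H z)) *
         (deriv φ (H z) * Real.sqrt (D (H z))) :=
    funext fun y => (hψd y).deriv
  -- derivative of P
  have hPd : ∀ z, HasDerivAt P (deriv D (H z) * Real.sqrt (D (H z)) / D (H z)) z :=
    fun z => (hDHd z).log (hDne (H z))
  have hP1 : deriv P = fun z => deriv D (H z) * Real.sqrt (D (H z)) / D (H z) :=
    funext fun z => (hPd z).deriv
  intro y
  -- second derivative of ψ at y
  have T :=
    ((((hD1Hd y).div_const 2).mul (hEd y)).add
      ((hSd y).mul ((hEd y).mul (((hSd y).const_sub (1 / h 1)).const_mul lam)))).mul (hφHd y)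
      |>.add ((((hSd y).mul (hEd y)).mul ((hφ1Hd y).mul (hSd y))))
  have e1 := T.deriv
  simp only [Pi.mul_def, Pi.add_def, Pi.div_def] at e1
  -- derivative of the drift term at y
  have U := (((((hD1Hd y).mul (hSd y)).div (hDHd y) (hDne (H y))).const_mul s).const_add
      (2 * μ)).mul (hψd y)
  have e2 := U.deriv
  simp only [Pi.mul_def, Pi.add_def, Pi.div_def] at e2
  simp only [hP1]
  rw [hψ1, e1, e2]
  have hψy : ψ y = Real.sqrt (D (H y)) * Real.exp (lam * (y / h 1 - H y)) * φ (H y) := rfl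
  have hRy : R y = r (H y) := rfl
  have hμ : μ = lam / h 1 := rfl
  have hs : s = 1 / 2 - q := rfl
  rw [hψy, hRy, hμ, hs]
  have heig := hφeq (H y)
  unfold Lop at heig
  set a := Real.sqrt (D (H y)) with ha
  have hane : a ≠ 0 := hsqne (H y)
  have ha2 : D (H y) = a ^ 2 := (Real.sq_sqrt (hDpos _).le).symm
  rw [ha2] at heig ⊢
  have hf2 : deriv (deriv φ) (H y) =
      (k * φ (H y) - ((1 + q) * deriv D (H y) - 2 * lam * a ^ 2) * deriv φ (H y) -
        (q * deriv (deriv D) (H y) + lam ^ 2 * a ^ 2 - (1 + q) * lam * deriv D (H y) +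
          r (H y)) * φ (H y)) / a ^ 2 := by
    field_simp
    linarith [heig]
  rw [hf2]
  field_simp
  ring
end
end

section
/- Let D be a positive, 1-periodic, C² function, r a continuous 1-periodic function, and q, λ ∈ ℝ. If (k, ψ) is a principal eigenpair of L_q^λ[r;D] and (k', ψ̃) is a principal eigenpair of L_q^{−λ}[r;D], then k = k'. Consequently, given principal eigenpairs for all λ ∈ ℝ, the spreading speed to the right equals the spreading speed to the left: inf_{λ>0} k_q^λ[r;D]/λ = inf_{λ>0} k_q^{−λ}[r;D]/λ. -/
open Real MeasureTheory Set Filter Topology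

noncomputable section

/-- Helper: from `ContDiff ℝ 2`, extract `ContDiff ℝ 1` of the derivative. -/
lemma contDiff_one_deriv_of_two {f : ℝ → ℝ} (hf : ContDiff ℝ 2 f) :
    ContDiff ℝ 1 (deriv f) := by
  have h : ContDiff ℝ ((1 : ℕ) + 1) f := by exact_mod_cast hf
  exact (contDiff_succ_iff_deriv.mp h).2.2

/-- Helper: the derivative of a periodic function is periodic. -/
lemma periodic_deriv_aux {f : ℝ → ℝ} (hf : Function.Periodic f 1) :
    Function.Periodic (deriv f) 1 := by
  intro x
  have h : (fun y => f (y + 1)) = f := funext fun y => hf y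
  calc deriv f (x + 1) = deriv (fun y => f (y + 1)) x := (deriv_comp_add_const f 1 x).symm
    _ = deriv f x := by rw [h]

/-- Key lemma: principal eigenvalues for `λ` and `−λ` coincide. -/
lemma eigen_symm (D r : ℝ → ℝ) (hD : ContDiff ℝ 2 D) (hDpos : ∀ x, 0 < D x)
    (hDper : Function.Periodic D 1)
    (q lam k k' : ℝ) (ψ ψt : ℝ → ℝ)
    (h1 : IsEigenpair q lam r D k ψ) (h2 : IsEigenpair q (-lam) r D k' ψt) :
    k = k' := by
  obtain ⟨hψC, hψpos, hψper, hψeq⟩ := h1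
  obtain ⟨htC, htpos, htper, hteq⟩ := h2
  have hψC1 : ContDiff ℝ 1 (deriv ψ) := contDiff_one_deriv_of_two hψC
  have htC1 : ContDiff ℝ 1 (deriv ψt) := contDiff_one_deriv_of_two htC
  have hψdiff : Differentiable ℝ ψ := hψC.differentiable two_ne_zero
  have htdiff : Differentiable ℝ ψt := htC.differentiable two_ne_zero
  have hDdiff : Differentiable ℝ D := hD.differentiable two_ne_zero
  -- the Green-identity antiderivative
  set G : ℝ → ℝ := fun y =>
    D y ^ (1 + q) * (deriv ψ y * ψt y - ψ y * deriv ψt y - 2 * lam * (ψ y * ψt y)) with hG_def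
  -- pointwise derivative of G
  have hG : ∀ x : ℝ, HasDerivAt G ((k - k') * (ψ x * ψt x * D x ^ q)) x := by
    intro x
    have hDd : HasDerivAt D (deriv D x) x := hDdiff.differentiableAt.hasDerivAt
    have hψd : HasDerivAt ψ (deriv ψ x) x := hψdiff.differentiableAt.hasDerivAt
    have htd : HasDerivAt ψt (deriv ψt x) x := htdiff.differentiableAt.hasDerivAt
    have hψdd : HasDerivAt (deriv ψ) (deriv (deriv ψ) x) x :=
      ((hψC1.differentiable one_ne_zero) x).hasDerivAt
    have htdd : HasDerivAt (deriv ψt) (deriv (deriv ψt) x) x :=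
      ((htC1.differentiable one_ne_zero) x).hasDerivAt
    have hpow : HasDerivAt (fun y => D y ^ (1 + q))
        (deriv D x * (1 + q) * D x ^ q) x := by
      have h := hDd.rpow_const (p := 1 + q) (Or.inl (hDpos x).ne')
      have he : (1 : ℝ) + q - 1 = q := by ring
      rwa [he] at h
    have hH : HasDerivAt
        (fun y => deriv ψ y * ψt y - ψ y * deriv ψt y - 2 * lam * (ψ y * ψt y))
        ((deriv (deriv ψ) x * ψt x + deriv ψ x * deriv ψt x)
          - (deriv ψ x * deriv ψt x + ψ x * deriv (deriv ψt) x)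
          - 2 * lam * (deriv ψ x * ψt x + ψ x * deriv ψt x)) x :=
      ((hψdd.mul htd).sub (hψd.mul htdd)).sub ((hψd.mul htd).const_mul (2 * lam))
    have hGd := hpow.mul hH
    refine hGd.congr_deriv (Eq.symm ?_)
    -- now an algebraic identity from the two eigen-equations
    have heq1 := hψeq x
    have heq2 := hteq x
    simp only [Lop] at heq1 heq2
    have hadd : D x ^ (1 + q) = D x * D x ^ q := by
      rw [rpow_add (hDpos x), rpow_one]
    rw [hadd]
    linear_combination (D x ^ q * ψ x) * heq2 - (D x ^ q * ψt x) * heq1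
  -- continuity of the derivative
  have hcontq : Continuous (fun x => D x ^ q) :=
    hD.continuous.rpow_const fun x => Or.inl (hDpos x).ne'
  have hcont : Continuous (fun x => ψ x * ψt x * D x ^ q) :=
    (hψC.continuous.mul htC.continuous).mul hcontq
  have hcont' : Continuous (fun x => (k - k') * (ψ x * ψt x * D x ^ q)) :=
    continuous_const.mul hcont
  -- integrate over one period
  have hint := intervalIntegral.integral_eq_sub_of_hasDerivAt
    (f := G) (f' := fun x => (k - k') * (ψ x * ψt x * D x ^ q))
    (fun x _ => hG x) (hcont'.intervalIntegrable 0 1)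
  -- G is 1-periodic, so G 1 = G 0
  have hGper : G 1 = G 0 := by
    have e1 : D 1 = D 0 := by simpa using hDper 0
    have e2 : ψ 1 = ψ 0 := by simpa using hψper 0
    have e3 : ψt 1 = ψt 0 := by simpa using htper 0
    have e4 : deriv ψ 1 = deriv ψ 0 := by simpa using periodic_deriv_aux hψper 0
    have e5 : deriv ψt 1 = deriv ψt 0 := by simpa using periodic_deriv_aux htper 0
    simp only [hG_def, e1, e2, e3, e4, e5]
  rw [hGper, sub_self, intervalIntegral.integral_const_mul] at hint
  have hIpos : 0 < ∫ x in (0:ℝ)..1, ψ x * ψt x * D x ^ q := by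
    apply intervalIntegral.intervalIntegral_pos_of_pos_on
      (hcont.intervalIntegrable 0 1)
    · intro x _
      exact mul_pos (mul_pos (hψpos x) (htpos x)) (rpow_pos_of_pos (hDpos x) q)
    · norm_num
  have hkk' : k - k' = 0 := by
    rcases mul_eq_zero.mp hint with h | h
    · exact h
    · exact absurd h hIpos.ne'
  linarith

/-- Proposition `left_right`. `k_q^{−λ}[r;D] = k_q^λ[r;D]`, and
consequently the rightward and leftward spreading speeds coincide. -/
theorem stmt_12 (D r : ℝ → ℝ) (hD : ContDiff ℝ 2 D) (hDpos : ∀ x, 0 < D x)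
    (hDper : Function.Periodic D 1) (hr : Continuous r) (hrper : Function.Periodic r 1)
    (q lam k k' : ℝ) (ψ ψt : ℝ → ℝ)
    (h1 : IsEigenpair q lam r D k ψ) (h2 : IsEigenpair q (-lam) r D k' ψt)
    (kk : ℝ → ℝ) (Ψ : ℝ → ℝ → ℝ)
    (hkk : ∀ l : ℝ, IsEigenpair q l r D (kk l) (Ψ l)) :
    k = k' ∧ speed kk = speed (fun l => kk (-l)) := by
  constructor
  · exact eigen_symm D r hD hDpos hDper q lam k k' ψ ψt h1 h2
  · have hsym : ∀ l : ℝ, kk l = kk (-l) := fun l =>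
      eigen_symm D r hD hDpos hDper q l (kk l) (kk (-l)) (Ψ l) (Ψ (-l)) (hkk l) (hkk (-l))
    unfold speed
    exact iInf_congr fun l => by rw [hsym l.1]
end
end

section
/- Let D ∈ C³(ℝ) and r ∈ C⁴(ℝ) be 1-periodic functions with D positive, both even (D(−x) = D(x), r(−x) = r(x)) and both monotonic on [0, 1/2]. Assume r'(x) ≠ 0 for all x ∈ (0, 1/2), r''(0) ≠ 0 and r''(1/2) ≠ 0. Suppose that for every q ∈ ℝ we are given a principal eigenpair (k(q), ψ_q) of L_q^0[r;D]. Then q ↦ k(q) is monotonic: if D and r have the same monotonicity on [0, 1/2] (both nonincreasing or both nondecreasing), then k is nonincreasing in q; if D and r have opposite monotonicity on [0, 1/2], then k is nondecreasing in q. -/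
open Real MeasureTheory Set Filter Topology

noncomputable section

/-! ### Auxiliary lemmas -/

lemma evenDeriv {f : ℝ → ℝ} (hf : Differentiable ℝ f) (he : ∀ x, f (-x) = f x) (x : ℝ) :
    deriv f (-x) = - deriv f x := by
  have h1 : HasDerivAt (fun y => f (-y)) (deriv f (-x) * (-1)) x :=
    (hf (-x)).hasDerivAt.comp x (hasDerivAt_neg x)
  have h2 : (fun y => f (-y)) = f := funext he
  rw [h2] at h1
  rw [h1.deriv]; ring

lemma oddDeriv {f : ℝ → ℝ} (hf : Differentiable ℝ f) (ho : ∀ x, f (-x) = - f x) (x : ℝ) :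
    deriv f (-x) = deriv f x := by
  have h1 : HasDerivAt (fun y => - f (-y)) (-(deriv f (-x) * (-1))) x :=
    ((hf (-x)).hasDerivAt.comp x (hasDerivAt_neg x)).neg
  have h2 : (fun y => - f (-y)) = f := by funext y; rw [ho]; ring
  rw [h2] at h1
  rw [h1.deriv]; ring

lemma periodicDeriv {f : ℝ → ℝ} (hf : Differentiable ℝ f) (hp : Function.Periodic f 1) (x : ℝ) :
    deriv f (x + 1) = deriv f x := by
  have h1 : HasDerivAt (fun y => f (y + 1)) (deriv f (x + 1) * 1) x :=
    (hf (x + 1)).hasDerivAt.comp x ((hasDerivAt_id x).add_const 1)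
  have h2 : (fun y => f (y + 1)) = f := funext hp
  rw [h2, mul_one] at h1
  exact h1.deriv.symm ▸ rfl

lemma evenDerivZero {f : ℝ → ℝ} (hf : Differentiable ℝ f) (he : ∀ x, f (-x) = f x) :
    deriv f 0 = 0 := by
  have := evenDeriv hf he 0
  simp at this; linarith

lemma evenDerivHalf {f : ℝ → ℝ} (hf : Differentiable ℝ f) (he : ∀ x, f (-x) = f x)
    (hp : Function.Periodic f 1) : deriv f (1 / 2) = 0 := by
  have h1 := evenDeriv hf he (1 / 2)
  have h2 := periodicDeriv hf hp (-(1 / 2))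
  norm_num at h1 h2
  linarith

lemma contDiffTwo {ψ : ℝ → ℝ} (h : ContDiff ℝ 2 ψ) :
    Differentiable ℝ ψ ∧ Differentiable ℝ (deriv ψ) ∧ Continuous (deriv (deriv ψ)) := by
  rw [show (2 : WithTop ℕ∞) = 1 + 1 from by norm_num, contDiff_succ_iff_deriv] at h
  obtain ⟨hd, -, hc⟩ := h
  rw [contDiff_one_iff_deriv] at hc
  exact ⟨hd, hc.1, hc.2⟩

lemma monoOn_deriv_nonneg {f : ℝ → ℝ} {a b x : ℝ} (hm : MonotoneOn f (Icc a b))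
    (hd : DifferentiableAt ℝ f x) (hx : x ∈ Ioo a b) : 0 ≤ deriv f x := by
  have ht : Tendsto (slope f x) (𝓝[>] x) (𝓝 (deriv f x)) :=
    (hasDerivAt_iff_tendsto_slope.mp hd.hasDerivAt).mono_left
      (nhdsWithin_mono _ (fun y hy => ne_of_gt hy))
  apply ge_of_tendsto ht
  filter_upwards [Ioo_mem_nhdsGT_of_mem (⟨le_refl x, hx.2⟩ : x ∈ Ico x b)] with y hy
  have h1 : f x ≤ f y := hm ⟨le_of_lt hx.1, le_of_lt hx.2⟩
    ⟨le_of_lt (lt_trans hx.1 hy.1), le_of_lt hy.2⟩ (le_of_lt hy.1)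
  rw [slope_def_field]
  apply div_nonneg (by linarith) (by linarith [hy.1])

lemma antiOn_deriv_nonpos {f : ℝ → ℝ} {a b x : ℝ} (hm : AntitoneOn f (Icc a b))
    (hd : DifferentiableAt ℝ f x) (hx : x ∈ Ioo a b) : deriv f x ≤ 0 := by
  have ht : Tendsto (slope f x) (𝓝[>] x) (𝓝 (deriv f x)) :=
    (hasDerivAt_iff_tendsto_slope.mp hd.hasDerivAt).mono_left
      (nhdsWithin_mono _ (fun y hy => ne_of_gt hy))
  apply le_of_tendsto ht
  filter_upwards [Ioo_mem_nhdsGT_of_mem (⟨le_refl x, hx.2⟩ : x ∈ Ico x b)] with y hy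
  have h1 : f y ≤ f x := hm ⟨le_of_lt hx.1, le_of_lt hx.2⟩
    ⟨le_of_lt (lt_trans hx.1 hy.1), le_of_lt hy.2⟩ (le_of_lt hy.1)
  rw [slope_def_field]
  apply div_nonpos_of_nonpos_of_nonneg (by linarith) (by linarith [hy.1])

/-- The flux `F = D ψ' + q D' ψ`. -/
def Ff (q : ℝ) (D ψ : ℝ → ℝ) (x : ℝ) : ℝ := D x * deriv ψ x + q * deriv D x * ψ x

/-- The weight `E = D^c = exp (c log D)`. -/
def Ef (c : ℝ) (D : ℝ → ℝ) (x : ℝ) : ℝ := Real.exp (c * Real.log (D x))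

lemma hasDerivAt_Ff {q k : ℝ} {r D ψ : ℝ → ℝ}
    (hDd : Differentiable ℝ D) (hDd' : Differentiable ℝ (deriv D))
    (hψd : Differentiable ℝ ψ) (hψd' : Differentiable ℝ (deriv ψ))
    (heq : ∀ x, Lop q 0 r D ψ x = k * ψ x) (x : ℝ) :
    HasDerivAt (Ff q D ψ) ((k - r x) * ψ x) x := by
  have h1 : HasDerivAt (fun y => D y * deriv ψ y + q * deriv D y * ψ y)
      ((deriv D x * deriv ψ x + D x * deriv (deriv ψ) x) +
        (q * (deriv (deriv D) x * ψ x + deriv D x * deriv ψ x))) x := by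
    have := ((hDd x).hasDerivAt.mul (hψd' x).hasDerivAt).add
      (((hDd' x).hasDerivAt.mul (hψd x).hasDerivAt).const_mul q)
    have hfun : (fun y => D y * deriv ψ y + q * deriv D y * ψ y) =
        (D * deriv ψ + fun y => q * (deriv D * ψ) y) := by
      funext y; simp only [Pi.add_apply, Pi.mul_apply]; ring
    rw [hfun]; exact this
  have h2 := heq x
  simp only [Lop] at h2
  have h3 : (deriv D x * deriv ψ x + D x * deriv (deriv ψ) x) +
      (q * (deriv (deriv D) x * ψ x + deriv D x * deriv ψ x)) = (k - r x) * ψ x := by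
    linear_combination h2
  rw [h3] at h1
  exact h1

lemma hasDerivAt_Ef {c : ℝ} {D : ℝ → ℝ} (hDd : Differentiable ℝ D) (hDpos : ∀ x, 0 < D x)
    (x : ℝ) : HasDerivAt (Ef c D) (c * (deriv D x / D x) * Ef c D x) x := by
  have h1 : HasDerivAt (fun y => c * Real.log (D y)) (c * (deriv D x / D x)) x := by
    have := ((hDd x).hasDerivAt.log (ne_of_gt (hDpos x))).const_mul c
    convert this using 1
  have h2 := h1.exp
  convert h2 using 1
  rfl
  rw [mul_comm]
  rfl

/-- Evenness of a positive periodic eigenfunction. -/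
lemma psi_even {q k : ℝ} {r D ψ : ℝ → ℝ}
    (hDd : Differentiable ℝ D) (hDd' : Differentiable ℝ (deriv D))
    (hDpos : ∀ x, 0 < D x) (hDeven : ∀ x, D (-x) = D x) (hreven : ∀ x, r (-x) = r x)
    (hψd : Differentiable ℝ ψ) (hψd' : Differentiable ℝ (deriv ψ))
    (hψpos : ∀ x, 0 < ψ x) (hψper : Function.Periodic ψ 1)
    (heq : ∀ x, Lop q 0 r D ψ x = k * ψ x) : ∀ x, ψ (-x) = ψ x := by
  have hD0 : ∀ x, D x ≠ 0 := fun x => ne_of_gt (hDpos x)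
  have hD'odd : ∀ x, deriv D (-x) = - deriv D x := evenDeriv hDd hDeven
  have hD''even : ∀ x, deriv (deriv D) (-x) = deriv (deriv D) x := oddDeriv hDd' hD'odd
  set g : ℝ → ℝ := fun x => deriv ψ x * ψ (-x) + ψ x * deriv ψ (-x) with hg_def
  set gd : ℝ → ℝ := fun x => deriv (deriv ψ) x * ψ (-x) - ψ x * deriv (deriv ψ) (-x) with hgd_def
  have hφ : ∀ x : ℝ, HasDerivAt (fun y => ψ (-y)) (-(deriv ψ (-x))) x := by
    intro x
    have := (hψd (-x)).hasDerivAt.comp x (hasDerivAt_neg x)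
    exact this.congr_deriv (by ring)
  have hφ' : ∀ x : ℝ, HasDerivAt (fun y => deriv ψ (-y)) (-(deriv (deriv ψ) (-x))) x := by
    intro x
    have := (hψd' (-x)).hasDerivAt.comp x (hasDerivAt_neg x)
    exact this.congr_deriv (by ring)
  have hg : ∀ x, HasDerivAt g (gd x) x := by
    intro x
    have h1 : HasDerivAt (fun y => deriv ψ y * ψ (-y) + ψ y * deriv ψ (-y))
        ((deriv (deriv ψ) x * ψ (-x) + deriv ψ x * (-(deriv ψ (-x)))) +
          (deriv ψ x * deriv ψ (-x) + ψ x * (-(deriv (deriv ψ) (-x))))) x :=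
      ((hψd' x).hasDerivAt.mul (hφ x)).add ((hψd x).hasDerivAt.mul (hφ' x))
    convert h1 using 1; simp only [hgd_def]; ring
  have hid : ∀ x, D x * gd x = -((1 + q) * deriv D x) * g x := by
    intro x
    have h1 := heq x
    have h2 := heq (-x)
    simp only [Lop] at h1 h2
    rw [hDeven x, hreven x, hD'odd x, hD''even x] at h2
    simp only [hgd_def, hg_def]
    linear_combination (ψ (-x)) * h1 - (ψ x) * h2
  set c : ℝ → ℝ := fun t => (1 + q) * (deriv D t / D t) with hc_def
  have hc_cont : Continuous c := by
    exact (continuous_const.mul (hDd'.continuous.div hDd.continuous hD0))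
  set A : ℝ → ℝ := fun x => ∫ t in (0:ℝ)..x, c t with hA_def
  have hA : ∀ x, HasDerivAt A (c x) x := by
    intro x
    exact intervalIntegral.integral_hasDerivAt_right (hc_cont.intervalIntegrable _ _)
      (hc_cont.stronglyMeasurableAtFilter _ _) hc_cont.continuousAt
  set h : ℝ → ℝ := fun x => g x * Real.exp (A x) with hh_def
  have hh : ∀ x, HasDerivAt h (0 : ℝ) x := by
    intro x
    have h1 : HasDerivAt h (gd x * Real.exp (A x) + g x * (Real.exp (A x) * c x)) x :=
      (hg x).mul ((hA x).exp)
    convert h1 using 1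
    have h2 := hid x
    have hgd : gd x = (-((1 + q) * deriv D x) * g x) / D x := by
      rw [eq_div_iff (hD0 x)]; linear_combination h2
    rw [hgd, hc_def]
    field_simp
    ring
  have hconst : ∀ x, h x = h 0 := by
    intro x
    exact is_const_of_deriv_eq_zero (fun y => (hh y).differentiableAt) (fun y => (hh y).deriv) x 0
  have hgform : ∀ x, g x = g 0 * Real.exp (-A x) := by
    intro x
    have h1 := hconst x
    have hA0 : A 0 = 0 := by simp [hA_def]
    simp only [hh_def, hA0, Real.exp_zero, mul_one] at h1
    rw [← h1, Real.exp_neg, mul_assoc, mul_inv_cancel₀ (Real.exp_ne_zero _), mul_one]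
  have hψ0 : ∀ x, ψ x ≠ 0 := fun x => ne_of_gt (hψpos x)
  set ρ : ℝ → ℝ := fun x => ψ (-x) / ψ x with hρ_def
  have hρ' : ∀ x, HasDerivAt ρ (-(g x) / (ψ x) ^ 2) x := by
    intro x
    have h1 : HasDerivAt ρ ((-(deriv ψ (-x)) * ψ x - ψ (-x) * deriv ψ x) / (ψ x) ^ 2) x :=
      (hφ x).div (hψd x).hasDerivAt (hψ0 x)
    convert h1 using 2
    simp only [hg_def]; ring
  have hρper : ρ 1 = ρ 0 := by
    have h1 : ψ (-1 : ℝ) = ψ 0 := by have := hψper (-1); norm_num at this; rw [this]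
    have h2 : ψ (1 : ℝ) = ψ 0 := by have := hψper 0; norm_num at this; rw [this]
    simp only [hρ_def, h1, h2, neg_zero]
  have hg0 : g 0 = 0 := by
    by_contra hne
    rcases lt_or_gt_of_ne hne with hlt | hgt
    · have hmono : StrictMono ρ := by
        apply strictMono_of_deriv_pos
        intro x
        rw [(hρ' x).deriv, hgform x]
        apply div_pos _ (pow_pos (hψpos x) 2)
        have : g 0 * Real.exp (-A x) < 0 :=
          mul_neg_of_neg_of_pos hlt (Real.exp_pos _)
        linarith
      have := hmono (show (0:ℝ) < 1 by norm_num)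
      rw [hρper] at this; exact lt_irrefl _ this
    · have hmono : StrictAnti ρ := by
        apply strictAnti_of_deriv_neg
        intro x
        rw [(hρ' x).deriv, hgform x]
        apply div_neg_of_neg_of_pos _ (pow_pos (hψpos x) 2)
        have : 0 < g 0 * Real.exp (-A x) :=
          mul_pos hgt (Real.exp_pos _)
        linarith
      have := hmono (show (0:ℝ) < 1 by norm_num)
      rw [hρper] at this; exact lt_irrefl _ this
  have hgall : ∀ x, g x = 0 := by
    intro x; rw [hgform x, hg0, zero_mul]
  have hρconst : ∀ x, ρ x = ρ 0 := by
    intro x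
    exact is_const_of_deriv_eq_zero (fun y => (hρ' y).differentiableAt)
      (fun y => by rw [(hρ' y).deriv, hgall y]; simp) x 0
  have hρ0 : ρ 0 = 1 := by
    simp only [hρ_def, neg_zero]
    exact div_self (hψ0 0)
  intro x
  have h1 := hρconst x
  rw [hρ0] at h1
  have h2 : ψ (-x) / ψ x = 1 := h1
  rw [div_eq_one_iff_eq (hψ0 x)] at h2
  exact h2

/-- If `r` is antitone on `[0,1/2]`, the flux `F` is nonpositive there. -/
lemma Ff_sign_anti {q k : ℝ} {r D ψ : ℝ → ℝ}
    (hrc : Continuous r) (hψc : Continuous ψ) (hψpos : ∀ x, 0 < ψ x)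
    (hF : ∀ x, HasDerivAt (Ff q D ψ) ((k - r x) * ψ x) x)
    (hF0 : Ff q D ψ 0 = 0) (hFh : Ff q D ψ (1 / 2) = 0)
    (hra : AntitoneOn r (Icc 0 (1 / 2))) :
    ∀ x ∈ Icc (0 : ℝ) (1 / 2), Ff q D ψ x ≤ 0 := by
  set s : ℝ → ℝ := fun t => (k - r t) * ψ t with hs_def
  have hsc : Continuous s := (continuous_const.sub hrc).mul hψc
  have hint : ∀ a b : ℝ, IntervalIntegrable s volume a b := fun a b =>
    hsc.intervalIntegrable a b
  have hFTC : ∀ a b : ℝ, Ff q D ψ b - Ff q D ψ a = ∫ t in a..b, s t := fun a b =>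
    (intervalIntegral.integral_eq_sub_of_hasDerivAt (fun t _ => hF t) (hint a b)).symm
  have hmono : MonotoneOn (fun t => k - r t) (Icc (0:ℝ) (1 / 2)) := fun u hu v hv huv => by
    have := hra hu hv huv; simp only; linarith
  intro x hx
  by_contra hcon
  push_neg at hcon
  have hx0 : x ≠ 0 := by rintro rfl; rw [hF0] at hcon; linarith
  have hxh : x ≠ 1 / 2 := by rintro rfl; rw [hFh] at hcon; linarith
  have hxIoo : 0 < x ∧ x < 1 / 2 :=
    ⟨lt_of_le_of_ne hx.1 (Ne.symm hx0), lt_of_le_of_ne hx.2 hxh⟩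
  have hFx : Ff q D ψ x = ∫ t in (0:ℝ)..x, s t := by
    have := hFTC 0 x; rw [hF0] at this; linarith
  have hsx : 0 < k - r x := by
    by_contra hle
    push_neg at hle
    have h1 : ∀ t ∈ Icc (0:ℝ) x, s t ≤ 0 := by
      intro t ht
      have h2 : k - r t ≤ k - r x :=
        hmono ⟨ht.1, le_trans ht.2 hx.2⟩ hx ht.2
      exact mul_nonpos_of_nonpos_of_nonneg (by linarith) (le_of_lt (hψpos t))
    have h3 : (∫ t in (0:ℝ)..x, s t) ≤ ∫ t in (0:ℝ)..x, (0:ℝ) :=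
      intervalIntegral.integral_mono_on (le_of_lt hxIoo.1) (hint 0 x)
        (intervalIntegrable_const) h1
    simp at h3
    rw [hFx] at hcon; linarith
  have htail : 0 < ∫ t in x..(1:ℝ)/2, s t := by
    have h1 : 0 < ∫ t in x..(1:ℝ)/2, (k - r x) * ψ t := by
      rw [intervalIntegral.integral_const_mul]
      apply mul_pos hsx
      apply intervalIntegral.intervalIntegral_pos_of_pos_on (hψc.intervalIntegrable _ _)
        (fun t _ => hψpos t) hxIoo.2
    refine lt_of_lt_of_le h1 (intervalIntegral.integral_mono_on (le_of_lt hxIoo.2)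
      ((continuous_const.mul hψc).intervalIntegrable _ _) (hint _ _) ?_)
    intro t ht
    have h2 : k - r x ≤ k - r t := hmono hx ⟨le_trans hx.1 ht.1, ht.2⟩ ht.1
    exact mul_le_mul_of_nonneg_right h2 (le_of_lt (hψpos t))
  have h4 := hFTC x (1 / 2)
  rw [hFh] at h4
  linarith

/-- If `r` is monotone on `[0,1/2]`, the flux `F` is nonnegative there. -/
lemma Ff_sign_mono {q k : ℝ} {r D ψ : ℝ → ℝ}
    (hrc : Continuous r) (hψc : Continuous ψ) (hψpos : ∀ x, 0 < ψ x)
    (hF : ∀ x, HasDerivAt (Ff q D ψ) ((k - r x) * ψ x) x)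
    (hF0 : Ff q D ψ 0 = 0) (hFh : Ff q D ψ (1 / 2) = 0)
    (hrm : MonotoneOn r (Icc 0 (1 / 2))) :
    ∀ x ∈ Icc (0 : ℝ) (1 / 2), 0 ≤ Ff q D ψ x := by
  set s : ℝ → ℝ := fun t => (k - r t) * ψ t with hs_def
  have hsc : Continuous s := (continuous_const.sub hrc).mul hψc
  have hint : ∀ a b : ℝ, IntervalIntegrable s volume a b := fun a b =>
    hsc.intervalIntegrable a b
  have hFTC : ∀ a b : ℝ, Ff q D ψ b - Ff q D ψ a = ∫ t in a..b, s t := fun a b =>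
    (intervalIntegral.integral_eq_sub_of_hasDerivAt (fun t _ => hF t) (hint a b)).symm
  have hmono : AntitoneOn (fun t => k - r t) (Icc (0:ℝ) (1 / 2)) := fun u hu v hv huv => by
    have := hrm hu hv huv; simp only; linarith
  intro x hx
  by_contra hcon
  push_neg at hcon
  have hx0 : x ≠ 0 := by rintro rfl; rw [hF0] at hcon; linarith
  have hxh : x ≠ 1 / 2 := by rintro rfl; rw [hFh] at hcon; linarith
  have hxIoo : 0 < x ∧ x < 1 / 2 :=
    ⟨lt_of_le_of_ne hx.1 (Ne.symm hx0), lt_of_le_of_ne hx.2 hxh⟩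
  have hFx : Ff q D ψ x = ∫ t in (0:ℝ)..x, s t := by
    have := hFTC 0 x; rw [hF0] at this; linarith
  have hsx : k - r x < 0 := by
    by_contra hle
    push_neg at hle
    have h1 : ∀ t ∈ Icc (0:ℝ) x, (0:ℝ) ≤ s t := by
      intro t ht
      have h2 : k - r x ≤ k - r t :=
        hmono ⟨ht.1, le_trans ht.2 hx.2⟩ hx ht.2
      exact mul_nonneg (by linarith) (le_of_lt (hψpos t))
    have h3 : (∫ t in (0:ℝ)..x, (0:ℝ)) ≤ ∫ t in (0:ℝ)..x, s t :=
      intervalIntegral.integral_mono_on (le_of_lt hxIoo.1) (intervalIntegrable_const)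
        (hint 0 x) h1
    simp at h3
    rw [hFx] at hcon; linarith
  have htail : (∫ t in x..(1:ℝ)/2, s t) < 0 := by
    have h1 : (∫ t in x..(1:ℝ)/2, (k - r x) * ψ t) < 0 := by
      rw [intervalIntegral.integral_const_mul]
      apply mul_neg_of_neg_of_pos hsx
      apply intervalIntegral.intervalIntegral_pos_of_pos_on (hψc.intervalIntegrable _ _)
        (fun t _ => hψpos t) hxIoo.2
    refine lt_of_le_of_lt (intervalIntegral.integral_mono_on (le_of_lt hxIoo.2)
      (hint _ _) ((continuous_const.mul hψc).intervalIntegrable _ _) ?_) h1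
    intro t ht
    have h2 : k - r t ≤ k - r x := hmono hx ⟨le_trans hx.1 ht.1, ht.2⟩ ht.1
    exact mul_le_mul_of_nonneg_right h2 (le_of_lt (hψpos t))
  have h4 := hFTC x (1 / 2)
  rw [hFh] at h4
  linarith

/-- The key pointwise derivative identity. -/
lemma key_pointwise {q1 q2 k1 k2 : ℝ} {r D ψ1 ψ2 : ℝ → ℝ}
    (hDd : Differentiable ℝ D) (hDpos : ∀ x, 0 < D x)
    (hψ1d : Differentiable ℝ ψ1) (hψ2d : Differentiable ℝ ψ2)
    (hF1 : ∀ x, HasDerivAt (Ff q1 D ψ1) ((k1 - r x) * ψ1 x) x)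
    (hF2 : ∀ x, HasDerivAt (Ff q2 D ψ2) ((k2 - r x) * ψ2 x) x)
    (x : ℝ) :
    HasDerivAt (fun y => Ef ((q1 + q2) / 2) D y * (Ff q1 D ψ1 y * ψ2 y - Ff q2 D ψ2 y * ψ1 y))
      ((k1 - k2) * (Ef ((q1 + q2) / 2) D x * (ψ1 x * ψ2 x)) -
        ((q2 - q1) / 2) * ((Ef ((q1 + q2) / 2) D x / D x) *
          (deriv D x * (Ff q1 D ψ1 x * ψ2 x + Ff q2 D ψ2 x * ψ1 x)))) x := by
  set c := (q1 + q2) / 2 with hc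
  have hE := hasDerivAt_Ef (c := c) hDd hDpos x
  have h1 := hE.mul (((hF1 x).mul (hψ2d x).hasDerivAt).sub ((hF2 x).mul (hψ1d x).hasDerivAt))
  refine h1.congr_deriv ?_
  symm
  have hD0 : D x ≠ 0 := ne_of_gt (hDpos x)
  simp only [Ff, hc, Pi.sub_apply, Pi.mul_apply]
  field_simp
  ring

lemma even_periodic_integral {J : ℝ → ℝ} (hJc : Continuous J) (hJper : Function.Periodic J 1)
    (hJeven : ∀ x, J (-x) = J x) :
    ∫ x in (0:ℝ)..1, J x = 2 * ∫ x in (0:ℝ)..(1/2 : ℝ), J x := by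
  have h1 : ∫ x in (0:ℝ)..1, J x = ∫ x in (-(1/2) : ℝ)..(1/2 : ℝ), J x := by
    have h := hJper.intervalIntegral_add_eq 0 (-(1/2))
    norm_num at h
    exact h
  have h3 : ∫ x in (0:ℝ)..(1/2:ℝ), J (-x) = ∫ x in (-(1/2):ℝ)..(0:ℝ), J x := by
    simpa using intervalIntegral.integral_comp_neg (a := (0:ℝ)) (b := 1/2) (f := J)
  have h2 : ∫ x in (-(1/2):ℝ)..(0:ℝ), J x = ∫ x in (0:ℝ)..(1/2:ℝ), J x := by
    rw [← h3]
    simp only [hJeven]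
  have h4 : (∫ x in (-(1/2):ℝ)..(0:ℝ), J x) + ∫ x in (0:ℝ)..(1/2:ℝ), J x
      = ∫ x in (-(1/2):ℝ)..(1/2:ℝ), J x :=
    intervalIntegral.integral_add_adjacent_intervals (hJc.intervalIntegrable _ _)
      (hJc.intervalIntegrable _ _)
  rw [h1, ← h4, h2]
  ring

/-- Theorem `monotonicity (ii)`. Under symmetry, regularity and
monotonicity assumptions on `D` and `r`, the map `q ↦ k_q^0[r;D]` is monotonic:
nonincreasing if `D` and `r` have the same monotonicity on `[0,1/2]`, nondecreasing if
they have opposite monotonicity. -/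
theorem stmt_16 (D r : ℝ → ℝ) (hD : ContDiff ℝ 3 D) (hr : ContDiff ℝ 4 r)
    (hDpos : ∀ x, 0 < D x) (hDper : Function.Periodic D 1)
    (hrper : Function.Periodic r 1)
    (hDeven : ∀ x, D (-x) = D x) (hreven : ∀ x, r (-x) = r x)
    (hDmono : MonotoneOn D (Set.Icc 0 (1 / 2)) ∨ AntitoneOn D (Set.Icc 0 (1 / 2)))
    (hrmono : MonotoneOn r (Set.Icc 0 (1 / 2)) ∨ AntitoneOn r (Set.Icc 0 (1 / 2)))
    (hr' : ∀ x ∈ Set.Ioo (0 : ℝ) (1 / 2), deriv r x ≠ 0)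
    (hr''0 : deriv (deriv r) 0 ≠ 0) (hr''h : deriv (deriv r) (1 / 2) ≠ 0)
    (k : ℝ → ℝ) (ψ : ℝ → ℝ → ℝ)
    (hk : ∀ q : ℝ, IsEigenpair q 0 r D (k q) (ψ q)) :
    ((MonotoneOn D (Set.Icc 0 (1 / 2)) ∧ MonotoneOn r (Set.Icc 0 (1 / 2))) ∨
        (AntitoneOn D (Set.Icc 0 (1 / 2)) ∧ AntitoneOn r (Set.Icc 0 (1 / 2))) →
      Antitone k) ∧
    ((MonotoneOn D (Set.Icc 0 (1 / 2)) ∧ AntitoneOn r (Set.Icc 0 (1 / 2))) ∨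
        (AntitoneOn D (Set.Icc 0 (1 / 2)) ∧ MonotoneOn r (Set.Icc 0 (1 / 2))) →
      Monotone k) := by
  obtain ⟨hDd, hDd', -⟩ := contDiffTwo (hD.of_le (by norm_num))
  have hrc : Continuous r := hr.continuous
  have hD0 : ∀ x, D x ≠ 0 := fun x => ne_of_gt (hDpos x)
  have hψd : ∀ q, Differentiable ℝ (ψ q) := fun q => (contDiffTwo (hk q).1).1
  have hψd' : ∀ q, Differentiable ℝ (deriv (ψ q)) := fun q => (contDiffTwo (hk q).1).2.1
  have hψpos : ∀ q x, 0 < ψ q x := fun q => (hk q).2.1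
  have hψper : ∀ q, Function.Periodic (ψ q) 1 := fun q => (hk q).2.2.1
  have heq : ∀ q x, Lop q 0 r D (ψ q) x = k q * ψ q x := fun q => (hk q).2.2.2
  have hψeven : ∀ q x, ψ q (-x) = ψ q x := fun q =>
    psi_even hDd hDd' hDpos hDeven hreven (hψd q) (hψd' q) (hψpos q) (hψper q) (heq q)
  have hFder : ∀ q x, HasDerivAt (Ff q D (ψ q)) ((k q - r x) * ψ q x) x := fun q =>
    hasDerivAt_Ff hDd hDd' (hψd q) (hψd' q) (heq q)
  have hF0 : ∀ q, Ff q D (ψ q) 0 = 0 := by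
    intro q
    simp [Ff, evenDerivZero (hψd q) (hψeven q), evenDerivZero hDd hDeven]
  have hFh : ∀ q, Ff q D (ψ q) (1 / 2) = 0 := by
    intro q
    simp only [Ff]
    rw [evenDerivHalf (hψd q) (hψeven q) (hψper q), evenDerivHalf hDd hDeven hDper]
    ring
  have hFodd : ∀ q x, Ff q D (ψ q) (-x) = -Ff q D (ψ q) x := by
    intro q x
    simp only [Ff, hDeven, hψeven q, evenDeriv (hψd q) (hψeven q), evenDeriv hDd hDeven]
    ring
  have hFper : ∀ q x, Ff q D (ψ q) (x + 1) = Ff q D (ψ q) x := by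
    intro q x
    simp only [Ff, hDper x, hψper q x, periodicDeriv hDd hDper x,
      periodicDeriv (hψd q) (hψper q) x]
  have hFc : ∀ q, Continuous (Ff q D (ψ q)) := fun q =>
    (hDd.continuous.mul (hψd' q).continuous).add
      ((continuous_const.mul hDd'.continuous).mul (hψd q).continuous)
  have hD'0 : deriv D 0 = 0 := evenDerivZero hDd hDeven
  have hD'h : deriv D (1 / 2) = 0 := evenDerivHalf hDd hDeven hDper
  have hD'nn : MonotoneOn D (Icc 0 (1 / 2)) → ∀ x ∈ Icc (0:ℝ) (1 / 2), 0 ≤ deriv D x := by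
    intro hm x hx
    rcases eq_or_lt_of_le hx.1 with h0 | h0
    · rw [← h0, hD'0]
    · rcases eq_or_lt_of_le hx.2 with hh | hh
      · rw [hh, hD'h]
      · exact monoOn_deriv_nonneg hm (hDd x) ⟨h0, hh⟩
  have hD'np : AntitoneOn D (Icc 0 (1 / 2)) → ∀ x ∈ Icc (0:ℝ) (1 / 2), deriv D x ≤ 0 := by
    intro hm x hx
    rcases eq_or_lt_of_le hx.1 with h0 | h0
    · rw [← h0, hD'0]
    · rcases eq_or_lt_of_le hx.2 with hh | hh
      · rw [hh, hD'h]
      · exact antiOn_deriv_nonpos hm (hDd x) ⟨h0, hh⟩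
  -- the core integral identity
  have core : ∀ q1 q2 : ℝ, q1 < q2 → ∃ I Jh : ℝ, 0 < I ∧
      (k q1 - k q2) * I = (q2 - q1) * Jh ∧
      ((∀ x ∈ Icc (0:ℝ) (1 / 2), 0 ≤ deriv D x *
        (Ff q1 D (ψ q1) x * ψ q2 x + Ff q2 D (ψ q2) x * ψ q1 x)) → 0 ≤ Jh) ∧
      ((∀ x ∈ Icc (0:ℝ) (1 / 2), deriv D x *
        (Ff q1 D (ψ q1) x * ψ q2 x + Ff q2 D (ψ q2) x * ψ q1 x) ≤ 0) → Jh ≤ 0) := by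
    intro q1 q2 h12
    have hEc : Continuous (Ef ((q1 + q2) / 2) D) :=
      Real.continuous_exp.comp (continuous_const.mul (hDd.continuous.log hD0))
    have hEpos : ∀ x, 0 < Ef ((q1 + q2) / 2) D x := fun x => Real.exp_pos _
    have hEDpos : ∀ x, 0 < Ef ((q1 + q2) / 2) D x / D x := fun x =>
      div_pos (hEpos x) (hDpos x)
    have hPc : Continuous (fun x => Ef ((q1 + q2) / 2) D x * (ψ q1 x * ψ q2 x)) :=
      hEc.mul ((hψd q1).continuous.mul (hψd q2).continuous)
    have hJc : Continuous (fun x => (Ef ((q1 + q2) / 2) D x / D x) *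
        (deriv D x * (Ff q1 D (ψ q1) x * ψ q2 x + Ff q2 D (ψ q2) x * ψ q1 x))) :=
      (hEc.div hDd.continuous hD0).mul (hDd'.continuous.mul
        (((hFc q1).mul (hψd q2).continuous).add ((hFc q2).mul (hψd q1).continuous)))
    have hGd_cont : Continuous (fun x =>
        (k q1 - k q2) * (Ef ((q1 + q2) / 2) D x * (ψ q1 x * ψ q2 x)) -
        ((q2 - q1) / 2) * ((Ef ((q1 + q2) / 2) D x / D x) *
          (deriv D x * (Ff q1 D (ψ q1) x * ψ q2 x + Ff q2 D (ψ q2) x * ψ q1 x)))) :=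
      (continuous_const.mul hPc).sub (continuous_const.mul hJc)
    have hFTC : (∫ x in (0:ℝ)..1,
        ((k q1 - k q2) * (Ef ((q1 + q2) / 2) D x * (ψ q1 x * ψ q2 x)) -
        ((q2 - q1) / 2) * ((Ef ((q1 + q2) / 2) D x / D x) *
          (deriv D x * (Ff q1 D (ψ q1) x * ψ q2 x + Ff q2 D (ψ q2) x * ψ q1 x)))))
        = (Ef ((q1 + q2) / 2) D 1 * (Ff q1 D (ψ q1) 1 * ψ q2 1 - Ff q2 D (ψ q2) 1 * ψ q1 1)) -
          (Ef ((q1 + q2) / 2) D 0 * (Ff q1 D (ψ q1) 0 * ψ q2 0 - Ff q2 D (ψ q2) 0 * ψ q1 0)) :=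
      intervalIntegral.integral_eq_sub_of_hasDerivAt
        (fun t _ => key_pointwise hDd hDpos (hψd q1) (hψd q2) (hFder q1) (hFder q2) t)
        (hGd_cont.intervalIntegrable _ _)
    have hD1 : D 1 = D 0 := by simpa using hDper 0
    have hE1 : Ef ((q1 + q2) / 2) D 1 = Ef ((q1 + q2) / 2) D 0 := by
      simp only [Ef, hD1]
    have hG10 : (Ef ((q1 + q2) / 2) D 1 * (Ff q1 D (ψ q1) 1 * ψ q2 1 - Ff q2 D (ψ q2) 1 * ψ q1 1)) -
          (Ef ((q1 + q2) / 2) D 0 * (Ff q1 D (ψ q1) 0 * ψ q2 0 - Ff q2 D (ψ q2) 0 * ψ q1 0)) = 0 := by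
      have e1 : Ff q1 D (ψ q1) 1 = Ff q1 D (ψ q1) 0 := by simpa using hFper q1 0
      have e2 : Ff q2 D (ψ q2) 1 = Ff q2 D (ψ q2) 0 := by simpa using hFper q2 0
      have e3 : ψ q1 1 = ψ q1 0 := by simpa using hψper q1 0
      have e4 : ψ q2 1 = ψ q2 0 := by simpa using hψper q2 0
      rw [hE1, e1, e2, e3, e4]
      ring
    rw [hG10] at hFTC
    rw [intervalIntegral.integral_sub ((show Continuous (fun x =>
        (k q1 - k q2) * (Ef ((q1 + q2) / 2) D x * (ψ q1 x * ψ q2 x))) from continuous_const.mul hPc).intervalIntegrable _ _)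
      ((show Continuous (fun x => ((q2 - q1) / 2) *
        ((Ef ((q1 + q2) / 2) D x / D x) *
          (deriv D x * (Ff q1 D (ψ q1) x * ψ q2 x + Ff q2 D (ψ q2) x * ψ q1 x)))) from
          continuous_const.mul hJc).intervalIntegrable _ _),
      intervalIntegral.integral_const_mul, intervalIntegral.integral_const_mul] at hFTC
    -- symmetry reduction of the J integral
    have hJper : Function.Periodic (fun x => (Ef ((q1 + q2) / 2) D x / D x) *
        (deriv D x * (Ff q1 D (ψ q1) x * ψ q2 x + Ff q2 D (ψ q2) x * ψ q1 x))) 1 := by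
      intro x
      simp only [Ef, hDper x, hFper q1 x, hFper q2 x, hψper q1 x, hψper q2 x,
        periodicDeriv hDd hDper x]
    have hJeven : ∀ x, (Ef ((q1 + q2) / 2) D (-x) / D (-x)) *
        (deriv D (-x) * (Ff q1 D (ψ q1) (-x) * ψ q2 (-x) + Ff q2 D (ψ q2) (-x) * ψ q1 (-x)))
        = (Ef ((q1 + q2) / 2) D x / D x) *
        (deriv D x * (Ff q1 D (ψ q1) x * ψ q2 x + Ff q2 D (ψ q2) x * ψ q1 x)) := by
      intro x
      simp only [Ef, hDeven x, evenDeriv hDd hDeven x, hFodd q1 x, hFodd q2 x,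
        hψeven q1 x, hψeven q2 x]
      ring
    have hJred : (∫ x in (0:ℝ)..1, (Ef ((q1 + q2) / 2) D x / D x) *
        (deriv D x * (Ff q1 D (ψ q1) x * ψ q2 x + Ff q2 D (ψ q2) x * ψ q1 x)))
        = 2 * ∫ x in (0:ℝ)..(1/2:ℝ), (Ef ((q1 + q2) / 2) D x / D x) *
        (deriv D x * (Ff q1 D (ψ q1) x * ψ q2 x + Ff q2 D (ψ q2) x * ψ q1 x)) :=
      even_periodic_integral hJc hJper hJeven
    refine ⟨∫ x in (0:ℝ)..1, Ef ((q1 + q2) / 2) D x * (ψ q1 x * ψ q2 x),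
      ∫ x in (0:ℝ)..(1/2:ℝ), (Ef ((q1 + q2) / 2) D x / D x) *
        (deriv D x * (Ff q1 D (ψ q1) x * ψ q2 x + Ff q2 D (ψ q2) x * ψ q1 x)), ?_, ?_, ?_, ?_⟩
    · apply intervalIntegral.intervalIntegral_pos_of_pos_on (hPc.intervalIntegrable _ _)
        (fun x _ => mul_pos (hEpos x) (mul_pos (hψpos q1 x) (hψpos q2 x))) (by norm_num)
    · rw [hJred] at hFTC
      linarith
    · intro hsgn
      apply intervalIntegral.integral_nonneg (by norm_num : (0:ℝ) ≤ 1/2)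
      intro u hu
      exact mul_nonneg (le_of_lt (hEDpos u)) (hsgn u hu)
    · intro hsgn
      have h5 : (∫ x in (0:ℝ)..(1/2:ℝ), (Ef ((q1 + q2) / 2) D x / D x) *
          (deriv D x * (Ff q1 D (ψ q1) x * ψ q2 x + Ff q2 D (ψ q2) x * ψ q1 x)))
          ≤ ∫ x in (0:ℝ)..(1/2:ℝ), (0:ℝ) := by
        apply intervalIntegral.integral_mono_on (by norm_num : (0:ℝ) ≤ 1/2)
          (hJc.intervalIntegrable _ _) intervalIntegrable_const
        intro u hu
        exact mul_nonpos_of_nonneg_of_nonpos (le_of_lt (hEDpos u)) (hsgn u hu)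
      simpa using h5
  constructor
  · -- same monotonicity: Antitone
    intro hcase
    intro q1 q2 hle
    rcases eq_or_lt_of_le hle with rfl | hlt
    · exact le_refl _
    obtain ⟨I, Jh, hI, hEq, hJnn, -⟩ := core q1 q2 hlt
    have hJh : 0 ≤ Jh := by
      apply hJnn
      intro x hx
      rcases hcase with ⟨hDm, hrm⟩ | ⟨hDa, hra⟩
      · have hd := hD'nn hDm x hx
        have hf1 := Ff_sign_mono hrc (hψd q1).continuous (hψpos q1) (hFder q1)
          (hF0 q1) (hFh q1) hrm x hx
        have hf2 := Ff_sign_mono hrc (hψd q2).continuous (hψpos q2) (hFder q2)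
          (hF0 q2) (hFh q2) hrm x hx
        exact mul_nonneg hd (add_nonneg (mul_nonneg hf1 (le_of_lt (hψpos q2 x)))
          (mul_nonneg hf2 (le_of_lt (hψpos q1 x))))
      · have hd := hD'np hDa x hx
        have hf1 := Ff_sign_anti hrc (hψd q1).continuous (hψpos q1) (hFder q1)
          (hF0 q1) (hFh q1) hra x hx
        have hf2 := Ff_sign_anti hrc (hψd q2).continuous (hψpos q2) (hFder q2)
          (hF0 q2) (hFh q2) hra x hx
        have hsum : Ff q1 D (ψ q1) x * ψ q2 x + Ff q2 D (ψ q2) x * ψ q1 x ≤ 0 :=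
          add_nonpos (mul_nonpos_of_nonpos_of_nonneg hf1 (le_of_lt (hψpos q2 x)))
            (mul_nonpos_of_nonpos_of_nonneg hf2 (le_of_lt (hψpos q1 x)))
        nlinarith [mul_nonneg (neg_nonneg.2 hd) (neg_nonneg.2 hsum)]
    have h6 : 0 ≤ (k q1 - k q2) * I := by
      rw [hEq]
      exact mul_nonneg (by linarith) hJh
    nlinarith
  · -- opposite monotonicity: Monotone
    intro hcase
    intro q1 q2 hle
    rcases eq_or_lt_of_le hle with rfl | hlt
    · exact le_refl _
    obtain ⟨I, Jh, hI, hEq, -, hJnp⟩ := core q1 q2 hlt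
    have hJh : Jh ≤ 0 := by
      apply hJnp
      intro x hx
      rcases hcase with ⟨hDm, hra⟩ | ⟨hDa, hrm⟩
      · have hd := hD'nn hDm x hx
        have hf1 := Ff_sign_anti hrc (hψd q1).continuous (hψpos q1) (hFder q1)
          (hF0 q1) (hFh q1) hra x hx
        have hf2 := Ff_sign_anti hrc (hψd q2).continuous (hψpos q2) (hFder q2)
          (hF0 q2) (hFh q2) hra x hx
        exact mul_nonpos_of_nonneg_of_nonpos hd
          (add_nonpos (mul_nonpos_of_nonpos_of_nonneg hf1 (le_of_lt (hψpos q2 x)))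
            (mul_nonpos_of_nonpos_of_nonneg hf2 (le_of_lt (hψpos q1 x))))
      · have hd := hD'np hDa x hx
        have hf1 := Ff_sign_mono hrc (hψd q1).continuous (hψpos q1) (hFder q1)
          (hF0 q1) (hFh q1) hrm x hx
        have hf2 := Ff_sign_mono hrc (hψd q2).continuous (hψpos q2) (hFder q2)
          (hF0 q2) (hFh q2) hrm x hx
        exact mul_nonpos_of_nonpos_of_nonneg hd
          (add_nonneg (mul_nonneg hf1 (le_of_lt (hψpos q2 x)))
            (mul_nonneg hf2 (le_of_lt (hψpos q1 x))))
    have h6 : (k q1 - k q2) * I ≤ 0 := by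
      rw [hEq]
      exact mul_nonpos_of_nonneg_of_nonpos (by linarith) hJh
    nlinarith
end
end
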